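/- Let G be a countable group acting by measure class preserving transformations on a probability space (X, μ), and for each x ∈ X let ρ_x denote the quasi-regular representation of G on ℓ²(G·x) given by (ρ_x(g)f)(y) = f(g⁻¹y). Suppose m ∈ ℂ[G] and x, y ∈ X are such that for every r ∈ ℕ there exist points u ∈ G·x and v ∈ G·y with B_r(u) isomorphic (as rooted marked graph) to B_r(y) and B_r(v) isomorphic to B_r(x), where B_r is taken with respect to the generators in the support of m and a fixed enumeration of G. Then σ(ρ_x(m)) = σ(ρ_y(m)). -/

import Mathlib

/-- Isomorphism of the rooted marked balls of radius `r` (with respect to the enumeration `s`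
of the group and the marking generators in `gen`) around `x` and `y`. -/
def BallIso {G X : Type*} [Group G] [MulAction G X] (s : ℕ → G) (gen : Set G)
    (r : ℕ) (x y : X) : Prop :=
  ∃ ψ : X → X,
    Set.BijOn ψ {z | ∃ i ≤ r, z = s i • x} {z | ∃ i ≤ r, z = s i • y} ∧
    ψ x = y ∧
    ∀ u ∈ {z | ∃ i ≤ r, z = s i • x}, ∀ v ∈ {z | ∃ i ≤ r, z = s i • x},
      ∀ g ∈ gen, (v = g • u ↔ ψ v = g • ψ u)

open scoped InnerProductSpace ComplexConjugate ENNReal NNReal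

namespace Stmt15Aux

lemma norm_sq_ne_zero_iff (a : ℂ) : ‖a‖ ^ (2 : ℝ≥0∞).toReal ≠ 0 ↔ a ≠ 0 := by
  rw [ne_eq, Real.rpow_eq_zero_iff_of_nonneg (norm_nonneg a)]
  simp [norm_eq_zero]

lemma norm_transfer {ι κ : Type*} (V : lp (fun _ : ι => ℂ) 2) (W : lp (fun _ : κ => ℂ) 2)
    (j : ι → κ) (A : Set ι) (hj : Set.InjOn j A)
    (hV : ∀ z, V z ≠ 0 → z ∈ A)
    (hW1 : ∀ z ∈ A, W (j z) = V z)
    (hW2 : ∀ w, W w ≠ 0 → ∃ z ∈ A, j z = w) :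
    ‖W‖ = ‖V‖ := by
  have h2 : 0 < (2 : ℝ≥0∞).toReal := by norm_num
  rw [lp.norm_eq_tsum_rpow h2, lp.norm_eq_tsum_rpow h2]
  have key : ∑' w, ‖W w‖ ^ (2 : ℝ≥0∞).toReal = ∑' z, ‖V z‖ ^ (2 : ℝ≥0∞).toReal := by
    refine tsum_eq_tsum_of_ne_zero_bij (fun z => j z.1) ?_ ?_ ?_
    · rintro ⟨z₁, hz₁⟩ ⟨z₂, hz₂⟩ h
      have hz₁' : V z₁ ≠ 0 := (norm_sq_ne_zero_iff _).mp hz₁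
      have hz₂' : V z₂ ≠ 0 := (norm_sq_ne_zero_iff _).mp hz₂
      exact Subtype.ext (hj (hV _ hz₁') (hV _ hz₂') h)
    · intro w hw
      have hw' : W w ≠ 0 := (norm_sq_ne_zero_iff _).mp hw
      obtain ⟨z, hz, rfl⟩ := hW2 w hw'
      refine ⟨⟨z, ?_⟩, rfl⟩
      rw [Function.mem_support, norm_sq_ne_zero_iff, ← hW1 z hz]
      exact hw'
    · rintro ⟨z, hz⟩
      have hz' : V z ≠ 0 := (norm_sq_ne_zero_iff _).mp hz
      simp only [hW1 z (hV _ hz')]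
  rw [key]

lemma bddBelow_dense {ι : Type*}
    (T : lp (fun _ : ι => ℂ) 2 →L[ℂ] lp (fun _ : ι => ℂ) 2) (C : ℝ)
    (h : ∀ (f : lp (fun _ : ι => ℂ) 2) (t : Finset ι), (∀ z ∉ t, f z = 0) → C * ‖f‖ ≤ ‖T f‖) :
    ∀ f, C * ‖f‖ ≤ ‖T f‖ := by
  classical
  have hcl : IsClosed {f : lp (fun _ : ι => ℂ) 2 | C * ‖f‖ ≤ ‖T f‖} :=
    isClosed_le (by fun_prop) (by fun_prop)
  intro f
  have hsum := lp.hasSum_single (by norm_num : (2 : ℝ≥0∞) ≠ ⊤) f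
  have hmem : f ∈ closure {f : lp (fun _ : ι => ℂ) 2 | ∃ t : Finset ι, ∀ z ∉ t, f z = 0} := by
    refine mem_closure_of_tendsto hsum (Filter.Eventually.of_forall fun t => ⟨t, fun z hz => ?_⟩)
    rw [lp.coeFn_sum, Finset.sum_apply]
    exact Finset.sum_eq_zero fun i hi => lp.single_apply_ne 2 i _ (fun hzi => hz (hzi ▸ hi))
  exact hcl.closure_subset_iff.mpr (fun g hg => by obtain ⟨t, ht⟩ := hg; exact h g t ht) hmem

lemma exists_radius {G X : Type*} [Group G] [MulAction G X] (s : ℕ → G)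
    (hs : Function.Surjective s) (x : X) (Q : Finset X)
    (hQ : ∀ w ∈ Q, w ∈ MulAction.orbit G x) :
    ∃ r : ℕ, ∀ w ∈ Q, ∃ i ≤ r, w = s i • x := by
  classical
  induction Q using Finset.induction with
  | empty => exact ⟨0, by simp⟩
  | @insert a Q ha ih =>
    obtain ⟨r, hr⟩ := ih fun w hw => hQ w (Finset.mem_insert_of_mem hw)
    obtain ⟨g, hg⟩ := hQ a (Finset.mem_insert_self a Q)
    obtain ⟨i, rfl⟩ := hs g
    refine ⟨max i r, fun w hw => ?_⟩
    rcases Finset.mem_insert.1 hw with rfl | hw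
    · exact ⟨i, le_max_left _ _, hg.symm⟩
    · obtain ⟨i', hi', hw'⟩ := hr w hw
      exact ⟨i', le_trans hi' (le_max_right _ _), hw'⟩


variable {H : Type*} [NormedAddCommGroup H] [InnerProductSpace ℂ H] [CompleteSpace H]

lemma isUnit_of_bddBelow (T : H →L[ℂ] H) (c : ℝ) (hc : 0 < c)
    (h1 : ∀ f, c * ‖f‖ ≤ ‖T f‖)
    (h2 : ∀ f, c * ‖f‖ ≤ ‖ContinuousLinearMap.adjoint T f‖) :
    IsUnit T := by
  have hinj : Function.Injective T := by
    intro u v huv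
    have h := h1 (u - v)
    rw [map_sub, huv, sub_self, norm_zero] at h
    have : ‖u - v‖ ≤ 0 := by nlinarith [norm_nonneg (u - v)]
    rw [← sub_eq_zero]
    exact norm_le_zero_iff.mp this
  have hanti : AntilipschitzWith (⟨c, hc.le⟩ : ℝ≥0)⁻¹ T := by
    refine T.antilipschitz_of_bound fun f => ?_
    show ‖f‖ ≤ c⁻¹ * ‖T f‖
    rw [← mul_le_mul_iff_right₀ hc, ← mul_assoc, mul_inv_cancel₀ hc.ne', one_mul]
    exact h1 f
  haveI := hanti.completeSpace_range_clm
  have hrange : LinearMap.range (T : H →ₗ[ℂ] H) = ⊤ := by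
    rw [← Submodule.orthogonal_eq_bot_iff, Submodule.eq_bot_iff]
    intro v hv
    have hTv : ContinuousLinearMap.adjoint T v = 0 := by
      have h0 : ⟪T (ContinuousLinearMap.adjoint T v), v⟫_ℂ = 0 :=
        (Submodule.mem_orthogonal _ v).mp hv _ ⟨ContinuousLinearMap.adjoint T v, rfl⟩
      have h0' : ⟪v, T (ContinuousLinearMap.adjoint T v)⟫_ℂ = 0 := by
        rw [← inner_conj_symm, h0, map_zero]
      have h3 : ⟪ContinuousLinearMap.adjoint T v, ContinuousLinearMap.adjoint T v⟫_ℂ = 0 := by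
        rw [ContinuousLinearMap.adjoint_inner_left]
        exact h0'
      exact inner_self_eq_zero.mp h3
    have h := h2 v
    rw [hTv, norm_zero] at h
    have : ‖v‖ ≤ 0 := by nlinarith [norm_nonneg v]
    exact norm_le_zero_iff.mp this
  rw [ContinuousLinearMap.isUnit_iff_bijective]
  exact ⟨hinj, fun w => by
    have : w ∈ LinearMap.range (T : H →ₗ[ℂ] H) := hrange ▸ Submodule.mem_top
    obtain ⟨u, hu⟩ := this
    exact ⟨u, hu⟩⟩

lemma bddBelow_of_isUnit (T : H →L[ℂ] H) (h : IsUnit T) :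
    ∃ c : ℝ, 0 < c ∧ (∀ f, c * ‖f‖ ≤ ‖T f‖) ∧
      ∀ f, c * ‖f‖ ≤ ‖ContinuousLinearMap.adjoint T f‖ := by
  obtain ⟨u, rfl⟩ := h
  set V : H →L[ℂ] H := ↑u⁻¹ with hV
  have hVT : ∀ f, V ((u : H →L[ℂ] H) f) = f := by
    intro f
    have h := ContinuousLinearMap.ext_iff.mp u.inv_mul f
    rwa [ContinuousLinearMap.mul_apply, ContinuousLinearMap.one_apply] at h
  have hTV : ∀ f, (u : H →L[ℂ] H) (V f) = f := by
    intro f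
    have h := ContinuousLinearMap.ext_iff.mp u.mul_inv f
    rwa [ContinuousLinearMap.mul_apply, ContinuousLinearMap.one_apply] at h
  have hadj : ∀ f, (ContinuousLinearMap.adjoint V)
      ((ContinuousLinearMap.adjoint (u : H →L[ℂ] H)) f) = f := by
    intro f
    have hcomp : (u : H →L[ℂ] H) ∘L V = 1 := by
      ext g
      simpa [ContinuousLinearMap.comp_apply] using hTV g
    have := congrArg ContinuousLinearMap.adjoint hcomp
    rw [ContinuousLinearMap.adjoint_comp] at this
    have h1 : ContinuousLinearMap.adjoint (1 : H →L[ℂ] H) = 1 := by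
      rw [← ContinuousLinearMap.star_eq_adjoint, star_one]
    rw [h1] at this
    rw [ContinuousLinearMap.ext_iff] at this
    simpa [ContinuousLinearMap.comp_apply] using this f
  set d : ℝ := ‖V‖ + ‖ContinuousLinearMap.adjoint V‖ + 1 with hd
  have hd1 : (1 : ℝ) ≤ d := by
    have := norm_nonneg V
    have := norm_nonneg (ContinuousLinearMap.adjoint V)
    rw [hd]; linarith
  have hdpos : 0 < d := lt_of_lt_of_le one_pos hd1
  refine ⟨d⁻¹, by positivity, fun f => ?_, fun f => ?_⟩
  · rw [inv_mul_le_iff₀ hdpos]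
    have h1 : ‖f‖ ≤ ‖V‖ * ‖(u : H →L[ℂ] H) f‖ := by
      conv_lhs => rw [← hVT f]
      exact V.le_opNorm _
    nlinarith [norm_nonneg ((u : H →L[ℂ] H) f), norm_nonneg (ContinuousLinearMap.adjoint V),
      norm_nonneg V]
  · rw [inv_mul_le_iff₀ hdpos]
    have h1 : ‖f‖ ≤ ‖ContinuousLinearMap.adjoint V‖ *
        ‖ContinuousLinearMap.adjoint (u : H →L[ℂ] H) f‖ := by
      conv_lhs => rw [← hadj f]
      exact (ContinuousLinearMap.adjoint V).le_opNorm _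
    nlinarith [norm_nonneg (ContinuousLinearMap.adjoint (u : H →L[ℂ] H) f),
      norm_nonneg (ContinuousLinearMap.adjoint V), norm_nonneg V]



lemma adjoint_formula {G X : Type*} [Group G] [MulAction G X] (m : G →₀ ℂ) (x : X)
    (M : lp (fun _ : MulAction.orbit G x => ℂ) 2 →L[ℂ] lp (fun _ : MulAction.orbit G x => ℂ) 2)
    (hM : ∀ (f : lp (fun _ : MulAction.orbit G x => ℂ) 2) (z : MulAction.orbit G x),
      (M f : ∀ _ : MulAction.orbit G x, ℂ) z =
        ∑ g ∈ m.support, m g * (f : ∀ _ : MulAction.orbit G x, ℂ) (g⁻¹ • z)) :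
    ∀ (f : lp (fun _ : MulAction.orbit G x => ℂ) 2) (z : MulAction.orbit G x),
      (ContinuousLinearMap.adjoint M f : ∀ _ : MulAction.orbit G x, ℂ) z =
        ∑ g ∈ m.support, conj (m g) * (f : ∀ _ : MulAction.orbit G x, ℂ) (g • z) := by
  classical
  intro f z
  have h1 : (ContinuousLinearMap.adjoint M f : ∀ _ : MulAction.orbit G x, ℂ) z =
      ⟪lp.single 2 z (1 : ℂ), ContinuousLinearMap.adjoint M f⟫_ℂ := by
    rw [lp.inner_single_left]
    simp [RCLike.inner_apply]
  rw [h1, ContinuousLinearMap.adjoint_inner_right, lp.inner_eq_tsum]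
  have key : ∀ w : MulAction.orbit G x,
      ⟪(M (lp.single 2 z (1 : ℂ)) : ∀ _ : MulAction.orbit G x, ℂ) w,
        (f : ∀ _ : MulAction.orbit G x, ℂ) w⟫_ℂ =
      ∑ g ∈ m.support, (if w = g • z then conj (m g) *
        (f : ∀ _ : MulAction.orbit G x, ℂ) (g • z) else 0) := by
    intro w
    rw [RCLike.inner_apply, hM, map_sum, Finset.mul_sum]
    refine Finset.sum_congr rfl fun g _ => ?_
    rw [lp.single_apply, Pi.single_apply]
    by_cases h : w = g • z
    · subst h
      rw [if_pos rfl, if_pos (inv_smul_smul g z)]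
      simp [mul_comm]
    · have h' : g⁻¹ • w ≠ z := fun hc => h (by rw [← hc, smul_inv_smul])
      rw [if_neg h, if_neg h']
      simp
  rw [tsum_congr key, Summable.tsum_finsetSum (fun g _ => ?_)]
  · exact Finset.sum_congr rfl fun g _ => tsum_ite_eq (g • z) _
  · exact ⟨_, hasSum_ite_eq (g • z) _⟩


lemma transfer_bound {G X : Type*} [Group G] [MulAction G X]
    (s : ℕ → G) (hs : Function.Surjective s)
    (t₀ : Finset G) (a : ℂ) (c : G → ℂ) (k : G → G) (x y : X)
    (T : lp (fun _ : MulAction.orbit G x => ℂ) 2 →L[ℂ] lp (fun _ : MulAction.orbit G x => ℂ) 2)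
    (S : lp (fun _ : MulAction.orbit G y => ℂ) 2 →L[ℂ] lp (fun _ : MulAction.orbit G y => ℂ) 2)
    (hT : ∀ (f : lp (fun _ : MulAction.orbit G x => ℂ) 2) (z : MulAction.orbit G x),
      (T f : ∀ _ : MulAction.orbit G x, ℂ) z
        = a * (f : ∀ _ : MulAction.orbit G x, ℂ) z
          + ∑ g ∈ t₀, c g * (f : ∀ _ : MulAction.orbit G x, ℂ) (k g • z))
    (hS : ∀ (f : lp (fun _ : MulAction.orbit G y => ℂ) 2) (z : MulAction.orbit G y),
      (S f : ∀ _ : MulAction.orbit G y, ℂ) z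
        = a * (f : ∀ _ : MulAction.orbit G y, ℂ) z
          + ∑ g ∈ t₀, c g * (f : ∀ _ : MulAction.orbit G y, ℂ) (k g • z))
    (hloc : ∀ r : ℕ, ∃ v ∈ MulAction.orbit G y, ∃ ψ : X → X,
      Set.BijOn ψ {z | ∃ i ≤ r, z = s i • x} {z | ∃ i ≤ r, z = s i • v} ∧
      ∀ u ∈ {z | ∃ i ≤ r, z = s i • x}, ∀ w ∈ {z | ∃ i ≤ r, z = s i • x},
        ∀ g ∈ t₀, (w = k g • u ↔ ψ w = k g • ψ u))
    (C : ℝ) (hC : ∀ f, C * ‖f‖ ≤ ‖S f‖) :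
    ∀ f, C * ‖f‖ ≤ ‖T f‖ := by
  classical
  apply bddBelow_dense
  intro f t ht0
  set t' : Finset (MulAction.orbit G x) :=
    t.filter (fun z => (f : ∀ _ : MulAction.orbit G x, ℂ) z ≠ 0) with ht'def
  have ht' : ∀ z, (f : ∀ _ : MulAction.orbit G x, ℂ) z ≠ 0 → z ∈ t' := fun z hz =>
    Finset.mem_filter.mpr ⟨by_contra fun h => hz (ht0 z h), hz⟩
  have ht'0 : ∀ z ∈ t', (f : ∀ _ : MulAction.orbit G x, ℂ) z ≠ 0 := fun z hz =>
    (Finset.mem_filter.mp hz).2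
  set P : Finset X := t'.image (fun z => z.1) ∪
    t₀.biUnion (fun g => t'.image (fun z => k g • z.1) ∪
      t'.image (fun z => (k g)⁻¹ • z.1)) with hPdef
  have hP : ∀ w ∈ P, w ∈ MulAction.orbit G x := by
    intro w hw
    rw [hPdef, Finset.mem_union] at hw
    rcases hw with hw | hw
    · obtain ⟨z, _, rfl⟩ := Finset.mem_image.mp hw
      exact z.2
    · obtain ⟨g, _, hw⟩ := Finset.mem_biUnion.mp hw
      rcases Finset.mem_union.mp hw with hw | hw
      · obtain ⟨z, _, rfl⟩ := Finset.mem_image.mp hw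
        exact MulAction.smul_orbit_subset (k g) x ⟨z.1, z.2, rfl⟩
      · obtain ⟨z, _, rfl⟩ := Finset.mem_image.mp hw
        exact MulAction.smul_orbit_subset (k g)⁻¹ x ⟨z.1, z.2, rfl⟩
  obtain ⟨r, hr⟩ := exists_radius s hs x P hP
  obtain ⟨v, hv, ψ, hbij, hedge⟩ := hloc r
  set A : Set X := {z | ∃ i ≤ r, z = s i • x} with hAdef
  have hA : ∀ w ∈ P, w ∈ A := fun w hw => hr w hw
  have hBorb : ∀ w ∈ {z | ∃ i ≤ r, z = s i • v}, w ∈ MulAction.orbit G y := by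
    rintro w ⟨i, _, rfl⟩
    exact MulAction.smul_orbit_subset (s i) y ⟨v, hv, rfl⟩
  set j : MulAction.orbit G x → MulAction.orbit G y := fun z =>
    if h : (z : X) ∈ A then ⟨ψ z, hBorb _ (hbij.mapsTo h)⟩
    else ⟨y, MulAction.mem_orbit_self y⟩ with hjdef
  have hjval : ∀ (z : MulAction.orbit G x), (z : X) ∈ A → (j z : X) = ψ (z : X) := by
    intro z h
    rw [hjdef]
    simp only [dif_pos h]
  have hinj : Set.InjOn j {z : MulAction.orbit G x | (z : X) ∈ A} := by
    intro z₁ h₁ z₂ h₂ h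
    have h' : ((j z₁ : MulAction.orbit G y) : X) = ((j z₂ : MulAction.orbit G y) : X) :=
      congrArg _ h
    rw [hjval _ h₁, hjval _ h₂] at h'
    exact Subtype.ext (hbij.injOn h₁ h₂ h')
  have hmemA : ∀ z ∈ t', (z : X) ∈ A := fun z hz =>
    hA _ (Finset.mem_union_left _ (Finset.mem_image_of_mem _ hz))
  have hmem2 : ∀ g ∈ t₀, ∀ z ∈ t', (k g)⁻¹ • (z : X) ∈ A := by
    intro g hg z hz
    exact hA _ (Finset.mem_union_right _ (Finset.mem_biUnion.mpr ⟨g, hg,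
      Finset.mem_union_right _ (Finset.mem_image_of_mem _ hz)⟩))
  set F' : lp (fun _ : MulAction.orbit G y => ℂ) 2 :=
    ∑ z ∈ t', lp.single 2 (j z) ((f : ∀ _ : MulAction.orbit G x, ℂ) z) with hF'def
  have hF'apply : ∀ w, (F' : ∀ _ : MulAction.orbit G y, ℂ) w =
      ∑ z ∈ t', if w = j z then (f : ∀ _ : MulAction.orbit G x, ℂ) z else 0 := by
    intro w
    rw [hF'def, lp.coeFn_sum, Finset.sum_apply]
    simp only [lp.single_apply, Pi.single_apply, eq_rec_constant, dite_eq_ite]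
  have hF'j : ∀ z : MulAction.orbit G x, (z : X) ∈ A →
      (F' : ∀ _ : MulAction.orbit G y, ℂ) (j z) = (f : ∀ _ : MulAction.orbit G x, ℂ) z := by
    intro z hz
    rw [hF'apply]
    have hco : ∀ z' ∈ t', (if j z = j z' then (f : ∀ _ : MulAction.orbit G x, ℂ) z' else 0)
        = if z' = z then (f : ∀ _ : MulAction.orbit G x, ℂ) z' else 0 := by
      intro z' hz'
      refine if_congr ⟨fun h => hinj (hmemA z' hz') hz h.symm, fun h => by rw [h]⟩ rfl rfl
    rw [Finset.sum_congr rfl hco, Finset.sum_ite_eq' t' z]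
    split_ifs with h
    · rfl
    · have hfz : (f : ∀ _ : MulAction.orbit G x, ℂ) z = 0 := by
        by_contra hfz
        exact h (ht' z hfz)
      rw [hfz]
  have hF'supp : ∀ w, (F' : ∀ _ : MulAction.orbit G y, ℂ) w ≠ 0 → ∃ z ∈ t', j z = w := by
    intro w h
    rw [hF'apply] at h
    obtain ⟨z, hz, hne⟩ := Finset.exists_ne_zero_of_sum_ne_zero h
    by_cases h' : w = j z
    · exact ⟨z, hz, h'.symm⟩
    · rw [if_neg h'] at hne
      exact absurd rfl hne
  have hnorm : ‖F'‖ = ‖f‖ :=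
    norm_transfer f F' j {z : MulAction.orbit G x | (z : X) ∈ A} hinj
      (fun z hz => hmemA z (ht' z hz)) hF'j
      (fun w hw => by obtain ⟨z, hz, hjz⟩ := hF'supp w hw; exact ⟨z, hmemA z hz, hjz⟩)
  have hTsupp : ∀ z : MulAction.orbit G x,
      (T f : ∀ _ : MulAction.orbit G x, ℂ) z ≠ 0 → (z : X) ∈ A := by
    intro z hz
    rw [hT] at hz
    by_cases h0 : (f : ∀ _ : MulAction.orbit G x, ℂ) z ≠ 0
    · exact hmemA z (ht' z h0)
    · push_neg at h0
      rw [h0, mul_zero, zero_add] at hz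
      obtain ⟨g, hg, hne⟩ := Finset.exists_ne_zero_of_sum_ne_zero hz
      have hfz : (f : ∀ _ : MulAction.orbit G x, ℂ) (k g • z) ≠ 0 := fun h =>
        hne (by rw [h, mul_zero])
      have h1 : (k g • z : MulAction.orbit G x) ∈ t' := ht' _ hfz
      have h2 := hmem2 g hg _ h1
      rwa [MulAction.orbit.coe_smul, inv_smul_smul] at h2
  have hSF' : ∀ z : MulAction.orbit G x, (z : X) ∈ A →
      (S F' : ∀ _ : MulAction.orbit G y, ℂ) (j z)
        = (T f : ∀ _ : MulAction.orbit G x, ℂ) z := by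
    intro z hz
    rw [hS, hT, hF'j z hz]
    congr 1
    refine Finset.sum_congr rfl fun g hg => ?_
    congr 1
    by_cases hfz : (f : ∀ _ : MulAction.orbit G x, ℂ) (k g • z) ≠ 0
    · have h1 : (k g • z : MulAction.orbit G x) ∈ t' := ht' _ hfz
      have h2 : ((k g • z : MulAction.orbit G x) : X) ∈ A := hmemA _ h1
      have h2' : k g • (z : X) ∈ A := h2
      have hedge' : ψ (k g • (z : X)) = k g • ψ (z : X) := (hedge _ hz _ h2' g hg).mp rfl
      have hjj : j (k g • z) = k g • j z := by
        apply Subtype.ext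
        show ((j (k g • z) : MulAction.orbit G y) : X) = k g • ((j z : MulAction.orbit G y) : X)
        rw [hjval _ h2, hjval _ hz]
        exact hedge'
      rw [← hjj, hF'j _ h2]
    · push_neg at hfz
      rw [hfz]
      by_contra hne
      obtain ⟨z₁, hz₁t, hjz₁⟩ := hF'supp _ hne
      have hz₁A : (z₁ : X) ∈ A := hmemA _ hz₁t
      have e1 : ψ (z₁ : X) = k g • ψ (z : X) := by
        calc ψ (z₁ : X) = ((j z₁ : MulAction.orbit G y) : X) := (hjval _ hz₁A).symm
          _ = ((k g • j z : MulAction.orbit G y) : X) := by rw [hjz₁]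
          _ = k g • ((j z : MulAction.orbit G y) : X) := rfl
          _ = k g • ψ (z : X) := by rw [hjval _ hz]
      have e2 : (z₁ : X) = k g • (z : X) := (hedge _ hz _ hz₁A g hg).mpr e1
      have e3 : z₁ = k g • z := Subtype.ext e2
      exact (ht'0 _ hz₁t) (by rw [e3]; exact hfz)
  have hSF'supp : ∀ w, (S F' : ∀ _ : MulAction.orbit G y, ℂ) w ≠ 0 →
      ∃ z : MulAction.orbit G x, (z : X) ∈ A ∧ j z = w := by
    intro w hw
    rw [hS] at hw
    by_cases h0 : (F' : ∀ _ : MulAction.orbit G y, ℂ) w ≠ 0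
    · obtain ⟨z, hz, hjz⟩ := hF'supp w h0
      exact ⟨z, hmemA _ hz, hjz⟩
    · push_neg at h0
      rw [h0, mul_zero, zero_add] at hw
      obtain ⟨g, hg, hne⟩ := Finset.exists_ne_zero_of_sum_ne_zero hw
      have hne' : (F' : ∀ _ : MulAction.orbit G y, ℂ) (k g • w) ≠ 0 := fun h =>
        hne (by rw [h, mul_zero])
      obtain ⟨z₁, hz₁t, hjz₁⟩ := hF'supp _ hne'
      set z₂ : MulAction.orbit G x := (k g)⁻¹ • z₁ with hz₂def
      have hz₂A : (z₂ : X) ∈ A := hmem2 g hg z₁ hz₁t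
      have hz₁A : (z₁ : X) ∈ A := hmemA _ hz₁t
      have e0 : (z₁ : X) = k g • (z₂ : X) := by
        rw [hz₂def, MulAction.orbit.coe_smul, smul_inv_smul]
      have e1 : ψ (z₁ : X) = k g • ψ (z₂ : X) := (hedge _ hz₂A _ hz₁A g hg).mp e0
      have e2 : ψ (z₁ : X) = k g • (w : X) := by
        calc ψ (z₁ : X) = ((j z₁ : MulAction.orbit G y) : X) := (hjval _ hz₁A).symm
          _ = ((k g • w : MulAction.orbit G y) : X) := by rw [hjz₁]
          _ = k g • (w : X) := rfl
      have e3 : (w : X) = ψ (z₂ : X) := MulAction.injective (k g) (e2.symm.trans e1)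
      exact ⟨z₂, hz₂A, Subtype.ext (by rw [hjval _ hz₂A]; exact e3.symm)⟩
  have hnorm2 : ‖S F'‖ = ‖T f‖ :=
    norm_transfer (T f) (S F') j {z : MulAction.orbit G x | (z : X) ∈ A} hinj
      hTsupp hSF' hSF'supp
  calc C * ‖f‖ = C * ‖F'‖ := by rw [hnorm]
    _ ≤ ‖S F'‖ := hC F'
    _ = ‖T f‖ := hnorm2


set_option maxHeartbeats 1000000 in
lemma aux {G X : Type*} [Group G] [MulAction G X]
    (m : G →₀ ℂ) (x y : X) (s : ℕ → G) (hs : Function.Surjective s)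
    (hloc1 : ∀ r : ℕ, ∃ v ∈ MulAction.orbit G y, BallIso s (↑m.support) r x v)
    (Mx : lp (fun _ : MulAction.orbit G x => ℂ) 2 →L[ℂ] lp (fun _ : MulAction.orbit G x => ℂ) 2)
    (My : lp (fun _ : MulAction.orbit G y => ℂ) 2 →L[ℂ] lp (fun _ : MulAction.orbit G y => ℂ) 2)
    (hMx : ∀ (f : lp (fun _ : MulAction.orbit G x => ℂ) 2) (z : MulAction.orbit G x),
      (Mx f : ∀ _ : MulAction.orbit G x, ℂ) z =
        ∑ g ∈ m.support, m g * (f : ∀ _ : MulAction.orbit G x, ℂ) (g⁻¹ • z))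
    (hMy : ∀ (f : lp (fun _ : MulAction.orbit G y => ℂ) 2) (z : MulAction.orbit G y),
      (My f : ∀ _ : MulAction.orbit G y, ℂ) z =
        ∑ g ∈ m.support, m g * (f : ∀ _ : MulAction.orbit G y, ℂ) (g⁻¹ • z)) :
    spectrum ℂ Mx ⊆ spectrum ℂ My := by
  classical
  intro lam hlam
  by_contra hmem
  rw [spectrum.notMem_iff] at hmem
  set Ty : lp (fun _ : MulAction.orbit G y => ℂ) 2 →L[ℂ] lp (fun _ : MulAction.orbit G y => ℂ) 2 :=
    algebraMap ℂ _ lam - My with hTydef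
  set Tx : lp (fun _ : MulAction.orbit G x => ℂ) 2 →L[ℂ] lp (fun _ : MulAction.orbit G x => ℂ) 2 :=
    algebraMap ℂ _ lam - Mx with hTxdef
  obtain ⟨c, hc, hb1, hb2⟩ := bddBelow_of_isUnit Ty hmem
  have hTxf : ∀ (f : lp (fun _ : MulAction.orbit G x => ℂ) 2) (z : MulAction.orbit G x),
      (Tx f : ∀ _ : MulAction.orbit G x, ℂ) z
        = lam * (f : ∀ _ : MulAction.orbit G x, ℂ) z
          + ∑ g ∈ m.support, (-(m g)) * (f : ∀ _ : MulAction.orbit G x, ℂ) (g⁻¹ • z) := by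
    intro f z
    have h1 : Tx f = lam • f - Mx f := by
      rw [hTxdef, ContinuousLinearMap.sub_apply, Algebra.algebraMap_eq_smul_one,
        ContinuousLinearMap.smul_apply, ContinuousLinearMap.one_apply]
    rw [h1]
    have h2 : ((lam • f - Mx f : lp (fun _ : MulAction.orbit G x => ℂ) 2) :
        ∀ _ : MulAction.orbit G x, ℂ) z
        = lam * (f : ∀ _ : MulAction.orbit G x, ℂ) z
          - (Mx f : ∀ _ : MulAction.orbit G x, ℂ) z := by
      rw [lp.coeFn_sub, Pi.sub_apply, lp.coeFn_smul, Pi.smul_apply, smul_eq_mul]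
    rw [h2, hMx f z, sub_eq_add_neg, ← Finset.sum_neg_distrib]
    simp [neg_mul]
  have hTyf : ∀ (f : lp (fun _ : MulAction.orbit G y => ℂ) 2) (z : MulAction.orbit G y),
      (Ty f : ∀ _ : MulAction.orbit G y, ℂ) z
        = lam * (f : ∀ _ : MulAction.orbit G y, ℂ) z
          + ∑ g ∈ m.support, (-(m g)) * (f : ∀ _ : MulAction.orbit G y, ℂ) (g⁻¹ • z) := by
    intro f z
    have h1 : Ty f = lam • f - My f := by
      rw [hTydef, ContinuousLinearMap.sub_apply, Algebra.algebraMap_eq_smul_one,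
        ContinuousLinearMap.smul_apply, ContinuousLinearMap.one_apply]
    rw [h1]
    have h2 : ((lam • f - My f : lp (fun _ : MulAction.orbit G y => ℂ) 2) :
        ∀ _ : MulAction.orbit G y, ℂ) z
        = lam * (f : ∀ _ : MulAction.orbit G y, ℂ) z
          - (My f : ∀ _ : MulAction.orbit G y, ℂ) z := by
      rw [lp.coeFn_sub, Pi.sub_apply, lp.coeFn_smul, Pi.smul_apply, smul_eq_mul]
    rw [h2, hMy f z, sub_eq_add_neg, ← Finset.sum_neg_distrib]
    simp [neg_mul]
  have hedge1 : ∀ r : ℕ, ∃ v ∈ MulAction.orbit G y, ∃ ψ : X → X,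
      Set.BijOn ψ {z | ∃ i ≤ r, z = s i • x} {z | ∃ i ≤ r, z = s i • v} ∧
      ∀ u ∈ {z | ∃ i ≤ r, z = s i • x}, ∀ w ∈ {z | ∃ i ≤ r, z = s i • x},
        ∀ g ∈ m.support, (w = (fun g => g⁻¹) g • u ↔ ψ w = (fun g => g⁻¹) g • ψ u) := by
    intro r
    obtain ⟨v, hv, ψ, hbij, _, hedge⟩ := hloc1 r
    refine ⟨v, hv, ψ, hbij, ?_⟩
    intro u hu w hw g hg
    have h := hedge w hw u hu g (Finset.mem_coe.mpr hg)
    have e : ∀ (p q : X), p = g⁻¹ • q ↔ q = g • p := fun p q =>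
      ⟨fun h' => by rw [h', smul_inv_smul], fun h' => by rw [h', inv_smul_smul]⟩
    simp only []
    rw [e w u, e (ψ w) (ψ u)]
    exact h
  have hbdd1 : ∀ f, c * ‖f‖ ≤ ‖Tx f‖ :=
    transfer_bound s hs m.support lam (fun g => -(m g)) (fun g => g⁻¹) x y Tx Ty
      hTxf hTyf hedge1 c hb1
  have hTxadj : ContinuousLinearMap.adjoint Tx
      = algebraMap ℂ _ (starRingEnd ℂ lam) - ContinuousLinearMap.adjoint Mx := by
    rw [hTxdef, map_sub]
    congr 1
    rw [← ContinuousLinearMap.star_eq_adjoint, Algebra.algebraMap_eq_smul_one, star_smul,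
      star_one, Algebra.algebraMap_eq_smul_one, Complex.star_def]
  have hTyadj : ContinuousLinearMap.adjoint Ty
      = algebraMap ℂ _ (starRingEnd ℂ lam) - ContinuousLinearMap.adjoint My := by
    rw [hTydef, map_sub]
    congr 1
    rw [← ContinuousLinearMap.star_eq_adjoint, Algebra.algebraMap_eq_smul_one, star_smul,
      star_one, Algebra.algebraMap_eq_smul_one, Complex.star_def]
  have hadjx := adjoint_formula m x Mx hMx
  have hadjy := adjoint_formula m y My hMy
  have hTxaf : ∀ (f : lp (fun _ : MulAction.orbit G x => ℂ) 2) (z : MulAction.orbit G x),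
      (ContinuousLinearMap.adjoint Tx f : ∀ _ : MulAction.orbit G x, ℂ) z
        = conj lam * (f : ∀ _ : MulAction.orbit G x, ℂ) z
          + ∑ g ∈ m.support, (-(conj (m g))) * (f : ∀ _ : MulAction.orbit G x, ℂ)
              ((fun g => g) g • z) := by
    intro f z
    rw [hTxadj]
    have h1 : (algebraMap ℂ _ (starRingEnd ℂ lam) - ContinuousLinearMap.adjoint Mx) f
        = conj lam • f - ContinuousLinearMap.adjoint Mx f := by
      rw [ContinuousLinearMap.sub_apply, Algebra.algebraMap_eq_smul_one,
        ContinuousLinearMap.smul_apply, ContinuousLinearMap.one_apply]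
    rw [h1]
    have h2 : ((conj lam • f - ContinuousLinearMap.adjoint Mx f :
        lp (fun _ : MulAction.orbit G x => ℂ) 2) : ∀ _ : MulAction.orbit G x, ℂ) z
        = conj lam * (f : ∀ _ : MulAction.orbit G x, ℂ) z
          - (ContinuousLinearMap.adjoint Mx f : ∀ _ : MulAction.orbit G x, ℂ) z := by
      rw [lp.coeFn_sub, Pi.sub_apply, lp.coeFn_smul, Pi.smul_apply, smul_eq_mul]
    rw [h2, hadjx f z, sub_eq_add_neg, ← Finset.sum_neg_distrib]
    simp [neg_mul]
  have hTyaf : ∀ (f : lp (fun _ : MulAction.orbit G y => ℂ) 2) (z : MulAction.orbit G y),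
      (ContinuousLinearMap.adjoint Ty f : ∀ _ : MulAction.orbit G y, ℂ) z
        = conj lam * (f : ∀ _ : MulAction.orbit G y, ℂ) z
          + ∑ g ∈ m.support, (-(conj (m g))) * (f : ∀ _ : MulAction.orbit G y, ℂ)
              ((fun g => g) g • z) := by
    intro f z
    rw [hTyadj]
    have h1 : (algebraMap ℂ _ (starRingEnd ℂ lam) - ContinuousLinearMap.adjoint My) f
        = conj lam • f - ContinuousLinearMap.adjoint My f := by
      rw [ContinuousLinearMap.sub_apply, Algebra.algebraMap_eq_smul_one,
        ContinuousLinearMap.smul_apply, ContinuousLinearMap.one_apply]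
    rw [h1]
    have h2 : ((conj lam • f - ContinuousLinearMap.adjoint My f :
        lp (fun _ : MulAction.orbit G y => ℂ) 2) : ∀ _ : MulAction.orbit G y, ℂ) z
        = conj lam * (f : ∀ _ : MulAction.orbit G y, ℂ) z
          - (ContinuousLinearMap.adjoint My f : ∀ _ : MulAction.orbit G y, ℂ) z := by
      rw [lp.coeFn_sub, Pi.sub_apply, lp.coeFn_smul, Pi.smul_apply, smul_eq_mul]
    rw [h2, hadjy f z, sub_eq_add_neg, ← Finset.sum_neg_distrib]
    simp [neg_mul]
  have hedge2 : ∀ r : ℕ, ∃ v ∈ MulAction.orbit G y, ∃ ψ : X → X,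
      Set.BijOn ψ {z | ∃ i ≤ r, z = s i • x} {z | ∃ i ≤ r, z = s i • v} ∧
      ∀ u ∈ {z | ∃ i ≤ r, z = s i • x}, ∀ w ∈ {z | ∃ i ≤ r, z = s i • x},
        ∀ g ∈ m.support, (w = (fun g => g) g • u ↔ ψ w = (fun g => g) g • ψ u) := by
    intro r
    obtain ⟨v, hv, ψ, hbij, _, hedge⟩ := hloc1 r
    exact ⟨v, hv, ψ, hbij, fun u hu w hw g hg => hedge u hu w hw g (Finset.mem_coe.mpr hg)⟩
  have hbdd2 : ∀ f, c * ‖f‖ ≤ ‖ContinuousLinearMap.adjoint Tx f‖ :=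
    transfer_bound s hs m.support (conj lam) (fun g => -(conj (m g))) (fun g => g) x y
      (ContinuousLinearMap.adjoint Tx) (ContinuousLinearMap.adjoint Ty)
      hTxaf hTyaf hedge2 c hb2
  exact (spectrum.notMem_iff.mpr (isUnit_of_bddBelow Tx c hc hbdd1 hbdd2)) hlam

end Stmt15Aux

theorem stmt15 {G X : Type*} [Group G] [Countable G] [MulAction G X]
    (m : G →₀ ℂ) (x y : X)
    (s : ℕ → G) (hs : Function.Surjective s) (hs0 : s 0 = 1)
    (hloc : ∀ r : ℕ,
      (∃ u ∈ MulAction.orbit G x, BallIso s (↑m.support) r y u) ∧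
      (∃ v ∈ MulAction.orbit G y, BallIso s (↑m.support) r x v))
    (Mx : lp (fun _ : MulAction.orbit G x => ℂ) 2 →L[ℂ] lp (fun _ : MulAction.orbit G x => ℂ) 2)
    (My : lp (fun _ : MulAction.orbit G y => ℂ) 2 →L[ℂ] lp (fun _ : MulAction.orbit G y => ℂ) 2)
    (hMx : ∀ (f : lp (fun _ : MulAction.orbit G x => ℂ) 2) (z : MulAction.orbit G x),
      (Mx f : ∀ _ : MulAction.orbit G x, ℂ) z =
        ∑ g ∈ m.support, m g * (f : ∀ _ : MulAction.orbit G x, ℂ) (g⁻¹ • z))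
    (hMy : ∀ (f : lp (fun _ : MulAction.orbit G y => ℂ) 2) (z : MulAction.orbit G y),
      (My f : ∀ _ : MulAction.orbit G y, ℂ) z =
        ∑ g ∈ m.support, m g * (f : ∀ _ : MulAction.orbit G y, ℂ) (g⁻¹ • z)) :
    spectrum ℂ Mx = spectrum ℂ My := by
  exact Set.Subset.antisymm
    (Stmt15Aux.aux m x y s hs (fun r => (hloc r).2) Mx My hMx hMy)
    (Stmt15Aux.aux m y x s hs (fun r => (hloc r).1) My Mx hMy hMx)
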